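/- For every k ∈ ℕ, the relation ⪯ is a partial order on Types_k (reflexive, transitive and antisymmetric), and tp_k(ε), the prefFO k-type of the empty word, is its minimum: tp_k(ε) ⪯ τ for every τ ∈ Types_k. -/

import Mathlib

set_option maxHeartbeats 1000000

namespace PrefSynth

/-! ### Possibly infinite words -/

/-- A (finite or infinite) word over alphabet `A`: positions carrying `some` letter. -/
abbrev Word (A : Type) : Type := ℕ → Option A

/-- `m` is a position of the word `w`. -/
def Word.pos {A : Type} (w : Word A) (m : ℕ) : Prop := w m ≠ none

/-- A genuine word: its domain is downward closed. -/
def Word.Closed {A : Type} (w : Word A) : Prop :=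
  ∀ i j : ℕ, i ≤ j → w j ≠ none → w i ≠ none

/-- The finite word given by a list. -/
def Word.ofList {A : Type} (l : List A) : Word A := fun i => l[i]?

/-- The infinite word given by a function. -/
def Word.ofFun {A : Type} (u : ℕ → A) : Word A := fun i => some (u i)

/-- The prefix of a word consisting of its first `n` positions; `Word.take w (m+1)`
is `w[0…m]`. -/
def Word.take {A : Type} (w : Word A) (n : ℕ) : Word A :=
  fun i => if i < n then w i else none

/-- `u` is a prefix of `v`. -/
def Word.IsPrefix {A : Type} (u v : Word A) : Prop :=
  ∀ i, u i ≠ none → v i = u i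

/-! ### Prefix first-order logic on words

Formulas in context `n`: the free variables are `Fin n`; when `n ≥ 1`, the variable
`0` is the bounding variable `x̄`, all other variables are prefix variables, and
every quantifier is of the form `∃ x < x̄` (new variables are appended at the end,
i.e. interpreted through `Fin.snoc`). -/

inductive PFm (A : Type) : ℕ → Type where
  | eq {n} : Fin n → Fin n → PFm A n
  | lt {n} : Fin n → Fin n → PFm A n
  | letter {n} : A → Fin n → PFm A n
  | and {n} : PFm A n → PFm A n → PFm A n
  | not {n} : PFm A n → PFm A n
  | exlt {n} : PFm A (n + 2) → PFm A (n + 1)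

/-- Quantifier depth. -/
def PFm.depth {A : Type} : {n : ℕ} → PFm A n → ℕ
  | _, .eq _ _ => 0
  | _, .lt _ _ => 0
  | _, .letter _ _ => 0
  | _, .and φ ψ => max φ.depth ψ.depth
  | _, .not φ => φ.depth
  | _, .exlt φ => φ.depth + 1

/-- Satisfaction of a prefFO formula in a word, under an assignment of the
free variables to positions. -/
def PFm.Sat {A : Type} (w : Word A) : {n : ℕ} → PFm A n → (Fin n → ℕ) → Prop
  | _, .eq i j, ρ => ρ i = ρ j
  | _, .lt i j, ρ => ρ i < ρ j
  | _, .letter a i, ρ => w (ρ i) = some a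
  | _, .and φ ψ, ρ => PFm.Sat w φ ρ ∧ PFm.Sat w ψ ρ
  | _, .not φ, ρ => ¬ PFm.Sat w φ ρ
  | _, .exlt φ, ρ => ∃ m : ℕ, Word.pos w m ∧ m < ρ 0 ∧ PFm.Sat w φ (Fin.snoc ρ m)

/-- prefFO sentences: start by quantifying the bounding variable, and are closed
under boolean combinations. -/
inductive PSen (A : Type) : Type where
  | exB : PFm A 1 → PSen A
  | and : PSen A → PSen A → PSen A
  | not : PSen A → PSen A

/-- Quantifier depth of a sentence. -/
def PSen.depth {A : Type} : PSen A → ℕ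
  | .exB φ => φ.depth + 1
  | .and s t => max s.depth t.depth
  | .not s => s.depth

/-- Satisfaction of a prefFO sentence in a word. -/
def PSen.Sat {A : Type} (w : Word A) : PSen A → Prop
  | .exB φ => ∃ m : ℕ, Word.pos w m ∧ PFm.Sat w φ (fun _ => m)
  | .and s t => PSen.Sat w s ∧ PSen.Sat w t
  | .not s => ¬ PSen.Sat w s

/-- The prefFO `k`-type of a word: the set of prefFO sentences of quantifier
depth at most `k` it satisfies. -/
def tp {A : Type} (k : ℕ) (w : Word A) : Set (PSen A) :=
  {s | PSen.depth s ≤ k ∧ PSen.Sat w s}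

/-- `Types_k`: the set of prefFO `k`-types of finite words over `A`. -/
def WTypes (A : Type) (k : ℕ) : Set (Set (PSen A)) :=
  {T | ∃ l : List A, T = tp k (Word.ofList l)}

/-- The relation `⪯` on types: `τ ⪯ τ'` iff some finite word of type `τ` has an
extension of type `τ'`. -/
def typeLe {A : Type} (k : ℕ) (τ τ' : Set (PSen A)) : Prop :=
  ∃ u v : List A, tp k (Word.ofList u) = τ ∧ tp k (Word.ofList (u ++ v)) = τ'

/-- Two words agree on all prefFO sentences of quantifier depth at most `k`. -/
def prefEquiv {A : Type} (k : ℕ) (w w' : Word A) : Prop :=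
  ∀ s : PSen A, PSen.depth s ≤ k → (PSen.Sat w s ↔ PSen.Sat w' s)

/-! ### Full first-order logic on words -/

inductive FOFm (A : Type) : ℕ → Type where
  | eq {n} : Fin n → Fin n → FOFm A n
  | lt {n} : Fin n → Fin n → FOFm A n
  | letter {n} : A → Fin n → FOFm A n
  | and {n} : FOFm A n → FOFm A n → FOFm A n
  | not {n} : FOFm A n → FOFm A n
  | ex {n} : FOFm A (n + 1) → FOFm A n

def FOFm.depth {A : Type} : {n : ℕ} → FOFm A n → ℕ
  | _, .eq _ _ => 0
  | _, .lt _ _ => 0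
  | _, .letter _ _ => 0
  | _, .and φ ψ => max φ.depth ψ.depth
  | _, .not φ => φ.depth
  | _, .ex φ => φ.depth + 1

def FOFm.Sat {A : Type} (w : Word A) : {n : ℕ} → FOFm A n → (Fin n → ℕ) → Prop
  | _, .eq i j, ρ => ρ i = ρ j
  | _, .lt i j, ρ => ρ i < ρ j
  | _, .letter a i, ρ => w (ρ i) = some a
  | _, .and φ ψ, ρ => FOFm.Sat w φ ρ ∧ FOFm.Sat w ψ ρ
  | _, .not φ, ρ => ¬ FOFm.Sat w φ ρ
  | _, .ex φ, ρ => ∃ m : ℕ, Word.pos w m ∧ FOFm.Sat w φ (Fin.snoc ρ m)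

/-- Two words agree on all FO sentences of quantifier depth at most `k`. -/
def foEquiv {A : Type} (k : ℕ) (w w' : Word A) : Prop :=
  ∀ s : FOFm A 0, FOFm.depth s ≤ k →
    (FOFm.Sat w s Fin.elim0 ↔ FOFm.Sat w' s Fin.elim0)

/-! ### The prefix Ehrenfeucht–Fraïssé game on words

After the first (bounding) round, pebbles are kept as matched pairs of
positions: `(m, m')` with `m` in the first word and `m'` in the second. -/

/-- The agreement condition: the correspondence between pebbled positions
preserves equality, the order `<` and the letters. -/
def AgreeW {A : Type} (u v : Word A) (L : List (ℕ × ℕ)) : Prop :=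
  ∀ p ∈ L, ∀ q ∈ L,
    ((p.1 = q.1) ↔ (p.2 = q.2)) ∧ ((p.1 < q.1) ↔ (p.2 < q.2)) ∧
    (∀ a : A, u p.1 = some a ↔ v p.2 = some a)

/-- `DupWinW u v b b' r L`: with bounding pebbles placed on `b` (in `u`) and `b'`
(in `v`), and prefix pebbles `L` already placed, Duplicator wins the game with `r`
remaining rounds. -/
def DupWinW {A : Type} (u v : Word A) (b b' : ℕ) : ℕ → List (ℕ × ℕ) → Prop
  | 0, L => AgreeW u v ((b, b') :: L)
  | r + 1, L => AgreeW u v ((b, b') :: L) ∧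
      (∀ m, Word.pos u m → m < b →
        ∃ m', Word.pos v m' ∧ m' < b' ∧ DupWinW u v b b' r ((m, m') :: L)) ∧
      (∀ m', Word.pos v m' → m' < b' →
        ∃ m, Word.pos u m ∧ m < b ∧ DupWinW u v b b' r ((m, m') :: L))

/-! ### Data words -/

/-- A move of a data word: a System action together with a System process, or an
Environment action together with an Environment process. `A`, `B` are the System
and Environment alphabets; `P`, `Q` the System and Environment process sets. -/
abbrev DMove (A B P Q : Type) : Type := (A × P) ⊕ (B × Q)

/-- The process of a move. -/
def dproc {A B P Q : Type} : DMove A B P Q → P ⊕ Q :=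
  Sum.elim (fun ap => Sum.inl ap.2) (fun bq => Sum.inr bq.2)

/-- The action of a move. -/
def dact {A B P Q : Type} : DMove A B P Q → A ⊕ B :=
  Sum.elim (fun ap => Sum.inl ap.1) (fun bq => Sum.inr bq.1)

/-- The process acting at position `m` of a data word. -/
def procAt {A B P Q : Type} (d : Word (DMove A B P Q)) (m : ℕ) : Option (P ⊕ Q) :=
  (d m).map dproc

/-- The action taken at position `m` of a data word. -/
def actAt {A B P Q : Type} (d : Word (DMove A B P Q)) (m : ℕ) : Option (A ⊕ B) :=
  (d m).map dact

/-- Elements of the structure associated with a data word: one process element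
for every process, and one element for every position. -/
abbrev Elem (P Q : Type) : Type := (P ⊕ Q) ⊕ ℕ

/-- The `∼`-class (i.e. the process) of an element of a data word. -/
def classOfE {A B P Q : Type} (d : Word (DMove A B P Q)) : Elem P Q → Option (P ⊕ Q)
  | .inl q => some q
  | .inr m => procAt d m

/-! ### Prefix first-order logic on data words

`PDW A B p b x` : formulas in a context with `p` process variables, `b` bounding
variables and `x` prefix variables.  Sentences (possibly with constants, constants
being modelled as the initial free variables) are obtained by instantiating the
contexts. -/

/-- A variable of any of the three kinds. -/
abbrev DVar (p b x : ℕ) : Type := Fin p ⊕ (Fin b ⊕ Fin x)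

inductive PDW (A B : Type) : ℕ → ℕ → ℕ → Type where
  | eq {p b x} : DVar p b x → DVar p b x → PDW A B p b x
  | procS {p b x} : Fin p → PDW A B p b x
  | procE {p b x} : Fin p → PDW A B p b x
  | letter {p b x} : (A ⊕ B) → (Fin b ⊕ Fin x) → PDW A B p b x
  | lesim {p b x} : Fin x → Fin x → PDW A B p b x
  | sim {p b x} : Fin p → DVar p b x → PDW A B p b x
  | and {p b x} : PDW A B p b x → PDW A B p b x → PDW A B p b x
  | not {p b x} : PDW A B p b x → PDW A B p b x
  | exP {p b x} : PDW A B (p + 1) b x → PDW A B p b x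
  | exB {p b x} : PDW A B p (b + 1) x → PDW A B p b x
  | exX {p b x} : Fin b → PDW A B p b (x + 1) → PDW A B p b x

/-- Quantifier depth. -/
def PDW.depth {A B : Type} : {p b x : ℕ} → PDW A B p b x → ℕ
  | _, _, _, .eq _ _ => 0
  | _, _, _, .procS _ => 0
  | _, _, _, .procE _ => 0
  | _, _, _, .letter _ _ => 0
  | _, _, _, .lesim _ _ => 0
  | _, _, _, .sim _ _ => 0
  | _, _, _, .and φ ψ => max φ.depth ψ.depth
  | _, _, _, .not φ => φ.depth
  | _, _, _, .exP φ => φ.depth + 1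
  | _, _, _, .exB φ => φ.depth + 1
  | _, _, _, .exX _ φ => φ.depth + 1

/-- Interpretation of a variable as an element of the data-word structure. -/
def interpDVar {P Q : Type} {p b x : ℕ} (ρP : Fin p → P ⊕ Q) (ρB : Fin b → ℕ)
    (ρX : Fin x → ℕ) : DVar p b x → Elem P Q
  | .inl i => Sum.inl (ρP i)
  | .inr (.inl i) => Sum.inr (ρB i)
  | .inr (.inr i) => Sum.inr (ρX i)

/-- Satisfaction of a prefFO^dw formula in a data word, under assignments of the
process, bounding and prefix variables.  New bounding variables must be positions
lying in a fresh class (w.r.t. all present bounding variables), new prefix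
variables must be `≲` their associated bounding variable. -/
def PDW.Sat {A B P Q : Type} (d : Word (DMove A B P Q)) :
    {p b x : ℕ} → PDW A B p b x → (Fin p → P ⊕ Q) → (Fin b → ℕ) → (Fin x → ℕ) → Prop
  | _, _, _, .eq v w, ρP, ρB, ρX => interpDVar ρP ρB ρX v = interpDVar ρP ρB ρX w
  | _, _, _, .procS i, ρP, _, _ => ∃ q : P, ρP i = Sum.inl q
  | _, _, _, .procE i, ρP, _, _ => ∃ q : Q, ρP i = Sum.inr q
  | _, _, _, .letter a v, _, ρB, ρX => actAt d (Sum.elim ρB ρX v) = some a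
  | _, _, _, .lesim i j, _, _, ρX =>
      ρX i < ρX j ∧ ∃ q, procAt d (ρX i) = some q ∧ procAt d (ρX j) = some q
  | _, _, _, .sim i v, ρP, ρB, ρX => classOfE d (interpDVar ρP ρB ρX v) = some (ρP i)
  | _, _, _, .and φ ψ, ρP, ρB, ρX => PDW.Sat d φ ρP ρB ρX ∧ PDW.Sat d ψ ρP ρB ρX
  | _, _, _, .not φ, ρP, ρB, ρX => ¬ PDW.Sat d φ ρP ρB ρX
  | _, _, _, .exP φ, ρP, ρB, ρX => ∃ q : P ⊕ Q, PDW.Sat d φ (Fin.snoc ρP q) ρB ρX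
  | _, _, _, .exB φ, ρP, ρB, ρX => ∃ m : ℕ, d m ≠ none ∧
      (∀ j, procAt d m ≠ procAt d (ρB j)) ∧ PDW.Sat d φ ρP (Fin.snoc ρB m) ρX
  | _, _, _, .exX y φ, ρP, ρB, ρX => ∃ m : ℕ, d m ≠ none ∧ m < ρB y ∧
      procAt d m = procAt d (ρB y) ∧ PDW.Sat d φ ρP ρB (Fin.snoc ρX m)

/-- Satisfaction of a prefFO^dw sentence (no constants) in a data word. -/
def SatS {A B P Q : Type} (d : Word (DMove A B P Q)) (φ : PDW A B 0 0 0) : Prop :=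
  PDW.Sat d φ Fin.elim0 Fin.elim0 Fin.elim0

/-! ### Classes of a data word -/

/-- `m` is a position of process `q` in the data word `d`. -/
def isPosOf {A B P Q : Type} (d : Word (DMove A B P Q)) (q : P ⊕ Q) (m : ℕ) : Prop :=
  procAt d m = some q

open Classical in
/-- The class of process `q` in the data word `d`, as a (finite or infinite) word
over `A ⊕ B`: its `i`-th letter is the action taken at the `i`-th position of `q`. -/
noncomputable def classWord {A B P Q : Type} (d : Word (DMove A B P Q)) (q : P ⊕ Q) :
    Word (A ⊕ B) :=
  fun i =>
    if {m | isPosOf d q m}.Infinite ∨ i < Set.ncard {m | isPosOf d q m}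
    then actAt d (Nat.nth (isPosOf d q) i) else none

/-- The set of processes of `d` whose class has prefFO `k`-type `τ`. -/
def classesOfType {A B P Q : Type} (d : Word (DMove A B P Q)) (k : ℕ)
    (τ : Set (PSen (A ⊕ B))) : Set (P ⊕ Q) :=
  {q | tp k (classWord d q) = τ}

end PrefSynth
/-! ### The prefix Ehrenfeucht–Fraïssé game on data words (with constants) -/

namespace PrefSynth

/-- A pebble placed on a data word: a process pebble, a bounding pebble
or a prefix pebble. -/
inductive Peb (P Q : Type) : Type where
  | proc : P ⊕ Q → Peb P Q
  | bound : ℕ → Peb P Q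
  | pref : ℕ → Peb P Q

/-- The element on which a pebble is placed. -/
def Peb.elem {P Q : Type} : Peb P Q → Elem P Q
  | .proc q => Sum.inl q
  | .bound m => Sum.inr m
  | .pref m => Sum.inr m

/-- `e` is a System process element. -/
def IsProcSE {P Q : Type} (e : Elem P Q) : Prop := ∃ q : P, e = Sum.inl (Sum.inl q)

/-- `e` is an Environment process element. -/
def IsProcEE {P Q : Type} (e : Elem P Q) : Prop := ∃ q : Q, e = Sum.inl (Sum.inr q)

/-- `e` is a position labelled by the letter `a`. -/
def LetterIsE {A B P Q : Type} (d : Word (DMove A B P Q)) (e : Elem P Q) (a : A ⊕ B) :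
    Prop := ∃ m : ℕ, e = Sum.inr m ∧ actAt d m = some a

/-- `e ∼ f` in the data word `d`. -/
def SimE {A B P Q : Type} (d : Word (DMove A B P Q)) (e f : Elem P Q) : Prop :=
  ∃ q, classOfE d e = some q ∧ classOfE d f = some q

/-- `e ≲ f` in the data word `d`. -/
def LesimE {A B P Q : Type} (d : Word (DMove A B P Q)) (e f : Elem P Q) : Prop :=
  ∃ m m' : ℕ, e = Sum.inr m ∧ f = Sum.inr m' ∧ m < m' ∧ SimE d e f

/-- Agreement of a correspondence between elements of two data words: it must
preserve equality, `Proc_S`, `Proc_E`, the letters, `≲` and `∼`. -/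
def AgreeDW {A B P Q P' Q' : Type} (d : Word (DMove A B P Q))
    (d' : Word (DMove A B P' Q')) (E : List (Elem P Q × Elem P' Q')) : Prop :=
  ∀ e ∈ E, ∀ f ∈ E,
    ((e.1 = f.1) ↔ (e.2 = f.2)) ∧
    (IsProcSE e.1 ↔ IsProcSE e.2) ∧
    (IsProcEE e.1 ↔ IsProcEE e.2) ∧
    (∀ a : A ⊕ B, LetterIsE d e.1 a ↔ LetterIsE d' e.2 a) ∧
    (LesimE d e.1 f.1 ↔ LesimE d' e.2 f.2) ∧
    (SimE d e.1 f.1 ↔ SimE d' e.2 f.2)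

/-- A legal bounding move: a position whose class contains no previously placed
bounding pebble (from `l`) and no bounding constant (from `B0`). -/
def LegalBound {A B P Q : Type} (d : Word (DMove A B P Q)) (B0 : List ℕ)
    (l : List (Peb P Q)) (m : ℕ) : Prop :=
  d m ≠ none ∧ (∀ m₀ : ℕ, Peb.bound m₀ ∈ l → procAt d m ≠ procAt d m₀) ∧
    (∀ m₀ ∈ B0, procAt d m ≠ procAt d m₀)

/-- A legal prefix move: a position such that some previously placed bounding
pebble or bounding constant lies in the same class, at a later position. -/
def LegalPref {A B P Q : Type} (d : Word (DMove A B P Q)) (B0 : List ℕ)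
    (l : List (Peb P Q)) (m : ℕ) : Prop :=
  d m ≠ none ∧
    ∃ m₀ : ℕ, (Peb.bound m₀ ∈ l ∨ m₀ ∈ B0) ∧ m < m₀ ∧ procAt d m = procAt d m₀

/-- The matched pairs of elements determined by the constants `E0` and the
pebbles `L`. -/
def pairElems {P Q P' Q' : Type} (E0 : List (Elem P Q × Elem P' Q'))
    (L : List (Peb P Q × Peb P' Q')) : List (Elem P Q × Elem P' Q') :=
  E0 ++ L.map (fun pq => (pq.1.elem, pq.2.elem))

/-- `DupWinDW d d' E0 B0 B0' r L`: Duplicator wins the `r`-round prefix EF game on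
the data words `d` and `d'` with matched constant elements `E0` (the bounding
constants being interpreted by `B0` in `d` and by `B0'` in `d'`) and already
placed matched pebbles `L`. -/
def DupWinDW {A B P Q P' Q' : Type} (d : Word (DMove A B P Q))
    (d' : Word (DMove A B P' Q')) (E0 : List (Elem P Q × Elem P' Q'))
    (B0 B0' : List ℕ) : ℕ → List (Peb P Q × Peb P' Q') → Prop
  | 0, L => AgreeDW d d' (pairElems E0 L)
  | r + 1, L => AgreeDW d d' (pairElems E0 L) ∧
      (∀ q : P ⊕ Q, ∃ q' : P' ⊕ Q',
        DupWinDW d d' E0 B0 B0' r ((Peb.proc q, Peb.proc q') :: L)) ∧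
      (∀ q' : P' ⊕ Q', ∃ q : P ⊕ Q,
        DupWinDW d d' E0 B0 B0' r ((Peb.proc q, Peb.proc q') :: L)) ∧
      (∀ m : ℕ, LegalBound d B0 (L.map Prod.fst) m →
        ∃ m' : ℕ, LegalBound d' B0' (L.map Prod.snd) m' ∧
          DupWinDW d d' E0 B0 B0' r ((Peb.bound m, Peb.bound m') :: L)) ∧
      (∀ m' : ℕ, LegalBound d' B0' (L.map Prod.snd) m' →
        ∃ m : ℕ, LegalBound d B0 (L.map Prod.fst) m ∧
          DupWinDW d d' E0 B0 B0' r ((Peb.bound m, Peb.bound m') :: L)) ∧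
      (∀ m : ℕ, LegalPref d B0 (L.map Prod.fst) m →
        ∃ m' : ℕ, LegalPref d' B0' (L.map Prod.snd) m' ∧
          DupWinDW d d' E0 B0 B0' r ((Peb.pref m, Peb.pref m') :: L)) ∧
      (∀ m' : ℕ, LegalPref d' B0' (L.map Prod.snd) m' →
        ∃ m : ℕ, LegalPref d B0 (L.map Prod.fst) m ∧
          DupWinDW d d' E0 B0 B0' r ((Peb.pref m, Peb.pref m') :: L))

/-- The constants of a data word: interpretations of `cp` process constants,
`cb` bounding constants and `cx` prefix constants.  Validity: bounding and
prefix constants are positions, no two bounding constants share a class, and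
each prefix constant is `≲` some bounding constant. -/
def ValidConsts {A B P Q : Type} {cp cb cx : ℕ} (d : Word (DMove A B P Q))
    (γP : Fin cp → P ⊕ Q) (γB : Fin cb → ℕ) (γX : Fin cx → ℕ) : Prop :=
  (∀ j, d (γB j) ≠ none) ∧ (∀ j, d (γX j) ≠ none) ∧
  (∀ i j, i ≠ j → procAt d (γB i) ≠ procAt d (γB j)) ∧
  (∀ i, ∃ j, γX i < γB j ∧ procAt d (γX i) = procAt d (γB j))

/-- The matched constant elements determined by two interpretations of the same
constant symbols. -/
def constPairs {P Q P' Q' : Type} {cp cb cx : ℕ}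
    (γP : Fin cp → P ⊕ Q) (γB : Fin cb → ℕ) (γX : Fin cx → ℕ)
    (γP' : Fin cp → P' ⊕ Q') (γB' : Fin cb → ℕ) (γX' : Fin cx → ℕ) :
    List (Elem P Q × Elem P' Q') :=
  (List.ofFn fun i : Fin cp =>
    ((Sum.inl (γP i) : Elem P Q), (Sum.inl (γP' i) : Elem P' Q'))) ++
  (List.ofFn fun i : Fin cb =>
    ((Sum.inr (γB i) : Elem P Q), (Sum.inr (γB' i) : Elem P' Q'))) ++
  (List.ofFn fun i : Fin cx =>
    ((Sum.inr (γX i) : Elem P Q), (Sum.inr (γX' i) : Elem P' Q')))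

/-! ### The standard synthesis game -/

/-- A System strategy in the standard synthesis game: given the finite data word
played so far, output a System action and process, or pass (`none` plays the
role of `ε`). -/
abbrev Strat (A B P Q : Type) : Type := List (DMove A B P Q) → Option (A × P)

/-- The list of the first `n` moves of a data word. -/
def histList {M : Type} (d : Word M) (n : ℕ) : List M := (List.range n).filterMap d

/-- The data word `d` is compatible with the System strategy `σ`. -/
def CompatibleStd {A B P Q : Type} (σ : Strat A B P Q) (d : Word (DMove A B P Q)) :
    Prop :=
  ∀ i a p, d i = some (Sum.inl (a, p)) → σ (histList d i) = some (a, p)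

/-- The data word `d` is fair with respect to `σ`: either it is finite and `σ`
passes after it, or (being infinite) if `σ` wants to play infinitely often then
System actions occur infinitely often. -/
def FairStd {A B P Q : Type} (σ : Strat A B P Q) (d : Word (DMove A B P Q)) : Prop :=
  (∃ n, d n = none ∧ (∀ i, i < n → d i ≠ none) ∧ σ (histList d n) = none) ∨
  ((∀ n, d n ≠ none) ∧
    ((∀ N, ∃ i, N ≤ i ∧ σ (histList d (i + 1)) ≠ none) →
     (∀ N, ∃ i, N ≤ i ∧ ∃ a p, d i = some (Sum.inl (a, p)))))

/-- `σ` is winning for `φ` in the standard synthesis game: every compatible and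
fair data word satisfies `φ`. -/
def WinningStd {A B P Q : Type} (φ : PDW A B 0 0 0) (σ : Strat A B P Q) : Prop :=
  ∀ d : Word (DMove A B P Q), Word.Closed d → CompatibleStd σ d → FairStd σ d →
    SatS d φ

/-- System has an `(nS, nE)`-winning strategy for `φ` in the standard synthesis
game: a winning strategy whenever `|P_S| = nS` and `|P_E| = nE`. -/
def SystemWinsStd (A B : Type) (φ : PDW A B 0 0 0) (nS nE : ℕ) : Prop :=
  ∀ (P Q : Type), Finite P → Finite Q → Nat.card P = nS → Nat.card Q = nE →
    ∃ σ : Strat A B P Q, WinningStd φ σ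

/-! ### The symmetric game -/

/-- A System strategy in the symmetric game: may answer by any finite sequence
of System moves (`[]` playing the role of `ε`). -/
abbrev SymStrat (A B P Q : Type) : Type := List (DMove A B P Q) → List (A × P)

/-- The history after `n` rounds of the symmetric game, the Environment playing
the finite blocks `env 0, env 1, …` and System answering according to `σ`,
with strict alternation, Environment first. -/
def symHist {A B P Q : Type} (σ : SymStrat A B P Q) (env : ℕ → List (B × Q)) :
    ℕ → List (DMove A B P Q)
  | 0 => []
  | n + 1 =>
      let h := symHist σ env n ++ (env n).map Sum.inr
      h ++ (σ h).map Sum.inl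

/-- The data word `d` is compatible with the symmetric strategy `σ`: it is the
limit of the histories of an alternating play in which System follows `σ`. -/
def CompatibleSym {A B P Q : Type} (σ : SymStrat A B P Q)
    (d : Word (DMove A B P Q)) : Prop :=
  ∃ env : ℕ → List (B × Q),
    (∀ n i x, (symHist σ env n)[i]? = some x → d i = some x) ∧
    (∀ i, d i ≠ none → ∃ n, i < (symHist σ env n).length)

/-- Fairness in the symmetric game: if `d` is finite then `σ` passes after it. -/
def FairSym {A B P Q : Type} (σ : SymStrat A B P Q) (d : Word (DMove A B P Q)) :
    Prop :=
  ∀ n, d n = none → (∀ i, i < n → d i ≠ none) → σ (histList d n) = []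

/-- `σ` is winning for `φ` in the symmetric game. -/
def WinningSym {A B P Q : Type} (φ : PDW A B 0 0 0) (σ : SymStrat A B P Q) : Prop :=
  ∀ d : Word (DMove A B P Q), Word.Closed d → CompatibleSym σ d → FairSym σ d →
    SatS d φ

/-- System has an `(nS, nE)`-winning strategy for `φ` in the symmetric game. -/
def SystemWinsSym (A B : Type) (φ : PDW A B 0 0 0) (nS nE : ℕ) : Prop :=
  ∀ (P Q : Type), Finite P → Finite Q → Nat.card P = nS → Nat.card Q = nE →
    ∃ σ : SymStrat A B P Q, WinningSym φ σ

/-! ### The token game on types -/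

/-- A node of the arena: a prefFO `k`-type of finite words. -/
abbrev Typ (A : Type) (k : ℕ) : Type := {T : Set (PSen A) // T ∈ WTypes A k}

/-- The initial node: the type of the empty word. -/
def initTyp (A : Type) (k : ℕ) : Typ A k :=
  ⟨tp k (Word.ofList ([] : List A)), ⟨[], rfl⟩⟩

/-- The transition relation of the arena. -/
def typLe {A : Type} {k : ℕ} (τ τ' : Typ A k) : Prop := typeLe k τ.1 τ'.1

/-- A configuration: the position of each token in the arena.  `TS` and `TE` are
the sets of System and Environment tokens. -/
abbrev Conf (A : Type) (k : ℕ) (TS TE : Type) : Type := (TS ⊕ TE) → Typ A k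

/-- A System strategy in the token game: given the sequence of configurations
so far, where to move each System token. -/
abbrev TokStrat (A : Type) (k : ℕ) (TS TE : Type) : Type :=
  List (Conf A k TS TE) → TS → Typ A k

/-- A play of the token game: all tokens start on the initial node, tokens only
move along `⪯`, and the players strictly alternate, Environment first (at even
stages Environment moves, so System tokens stay put; at odd stages System moves). -/
def IsPlay {A : Type} {k : ℕ} {TS TE : Type} (conf : ℕ → Conf A k TS TE) : Prop :=
  (∀ t, conf 0 t = initTyp A k) ∧
  (∀ n t, typLe (conf n t) (conf (n + 1) t)) ∧
  (∀ n, Even n → ∀ t : TS, conf (n + 1) (Sum.inl t) = conf n (Sum.inl t)) ∧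
  (∀ n, ¬ Even n → ∀ t : TE, conf (n + 1) (Sum.inr t) = conf n (Sum.inr t))

/-- The play `conf` is compatible with the System strategy `σ`. -/
def CompatibleTok {A : Type} {k : ℕ} {TS TE : Type} (σ : TokStrat A k TS TE)
    (conf : ℕ → Conf A k TS TE) : Prop :=
  ∀ n, ¬ Even n → ∀ t : TS,
    conf (n + 1) (Sum.inl t) = σ (List.ofFn (fun i : Fin (n + 1) => conf i)) t

/-- The strategy `σ` only suggests legal moves (along `⪯`). -/
def StratLegal {A : Type} {k : ℕ} {TS TE : Type} (σ : TokStrat A k TS TE) : Prop :=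
  ∀ (h : List (Conf A k TS TE)) (hne : h ≠ []) (t : TS),
    typLe (h.getLast hne (Sum.inl t)) (σ h t)

/-- A configuration matches a `k`-counting function `c` (values `≥ k`
representing `k+`): the number of tokens on each type `τ` is exactly `c τ` when
`c τ < k`, and at least `k` otherwise. -/
def CfgMatches {A : Type} {k : ℕ} {TS TE : Type} (c : Typ A k → ℕ)
    (cfg : Conf A k TS TE) : Prop :=
  ∀ τ : Typ A k,
    (c τ < k → Nat.card {t : TS ⊕ TE // cfg t = τ} = c τ) ∧
    (¬ c τ < k → k ≤ Nat.card {t : TS ⊕ TE // cfg t = τ})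

/-- The acceptance set `Acc_φ`: the `k`-counting functions `c` such that every
data word whose numbers of classes of each prefFO `k`-type match `c` satisfies
`φ`. -/
def AccC (A B : Type) (k : ℕ) (φ : PDW A B 0 0 0) (c : Typ (A ⊕ B) k → ℕ) : Prop :=
  (∀ τ, c τ ≤ k) ∧
  ∀ (P Q : Type) (d : Word (DMove A B P Q)), Word.Closed d →
    (∀ τ : Typ (A ⊕ B) k,
      (c τ < k → Cardinal.mk ↥(classesOfType d k τ.1) = (c τ : Cardinal)) ∧
      (¬ c τ < k → (k : Cardinal) ≤ Cardinal.mk ↥(classesOfType d k τ.1))) →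
    SatS d φ

/-- The strategy `σ` is winning in the token game for `φ`: every compatible
maximal play stabilizes in a limit configuration satisfying the acceptance
condition. -/
def TokWinning {A B : Type} {k : ℕ} {TS TE : Type} (φ : PDW A B 0 0 0)
    (σ : TokStrat (A ⊕ B) k TS TE) : Prop :=
  ∀ conf : ℕ → Conf (A ⊕ B) k TS TE, IsPlay conf → CompatibleTok σ conf →
    ∃ N, (∀ n, N ≤ n → conf n = conf N) ∧
      ∃ c : Typ (A ⊕ B) k → ℕ, AccC A B k φ c ∧ CfgMatches c (conf N)

/-- The pair `(nS, nE)` is winning for System in the token game for `φ` (of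
depth `k`). -/
def SystemWinsTok (A B : Type) (k : ℕ) (φ : PDW A B 0 0 0) (nS nE : ℕ) : Prop :=
  ∀ (TS TE : Type), Finite TS → Finite TE → Nat.card TS = nS → Nat.card TE = nE →
    ∃ σ : TokStrat (A ⊕ B) k TS TE, StratLegal σ ∧ TokWinning φ σ

/-! ### An explicit encoding of prefFO^dw sentences, for decidability -/

/-- Encoding of a variable. -/
def encodeDVar {p b x : ℕ} : DVar p b x → ℕ
  | .inl i => Nat.pair 0 i.1
  | .inr (.inl i) => Nat.pair 1 i.1
  | .inr (.inr i) => Nat.pair 2 i.1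

/-- An explicit injective encoding of prefFO^dw formulas over the alphabets
`Fin m` and `Fin n` into the natural numbers. -/
def encodePDW {m n : ℕ} : {p b x : ℕ} → PDW (Fin m) (Fin n) p b x → ℕ
  | _, _, _, .eq v w => Nat.pair 0 (Nat.pair (encodeDVar v) (encodeDVar w))
  | _, _, _, .procS i => Nat.pair 1 i.1
  | _, _, _, .procE i => Nat.pair 2 i.1
  | _, _, _, .letter a v =>
      Nat.pair 3 (Nat.pair
        (Sum.elim (fun i => Nat.pair 0 i.1) (fun j => Nat.pair 1 j.1) a)
        (Sum.elim (fun i => Nat.pair 0 i.1) (fun j => Nat.pair 1 j.1) v))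
  | _, _, _, .lesim i j => Nat.pair 4 (Nat.pair i.1 j.1)
  | _, _, _, .sim i v => Nat.pair 5 (Nat.pair i.1 (encodeDVar v))
  | _, _, _, .and φ ψ => Nat.pair 6 (Nat.pair (encodePDW φ) (encodePDW ψ))
  | _, _, _, .not φ => Nat.pair 7 (encodePDW φ)
  | _, _, _, .exP φ => Nat.pair 8 (encodePDW φ)
  | _, _, _, .exB φ => Nat.pair 9 (encodePDW φ)
  | _, _, _, .exX y φ => Nat.pair 10 (Nat.pair y.1 (encodePDW φ))

end PrefSynth
namespace PrefSynth

variable {A : Type}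

/-- Atomic data of a pebble configuration. -/
def Atom (A : Type) (n : ℕ) : Type :=
  (Fin n → Fin n → Prop) × (Fin n → Fin n → Prop) × (Fin n → Option A)

def atomL (l : List A) {n : ℕ} (ρ : Fin (n + 1) → ℕ) : Atom A (n + 1) :=
  ⟨fun i j => ρ i = ρ j, fun i j => ρ i < ρ j, fun i => l[ρ i]?⟩

/-- Semantic prefFO types of depth `r` in context with `n` prefix pebbles. -/
def LT (A : Type) : ℕ → ℕ → Type
  | 0, n => Atom A (n + 1)
  | r + 1, n => Atom A (n + 1) × Set (LT A r (n + 1))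

def ltype : (r : ℕ) → (l : List A) → {n : ℕ} → (Fin (n + 1) → ℕ) → LT A r n
  | 0, l, _, ρ => atomL l ρ
  | r + 1, l, _, ρ =>
      ⟨atomL l ρ,
       {t | ∃ m, m < ρ 0 ∧ m < l.length ∧ t = ltype r l (Fin.snoc ρ m)}⟩

lemma atomL_eq_iff {l l' : List A} {n : ℕ} {ρ ρ' : Fin (n + 1) → ℕ} :
    atomL l ρ = atomL l' ρ' ↔
      ((∀ i j, (ρ i = ρ j ↔ ρ' i = ρ' j)) ∧ (∀ i j, (ρ i < ρ j ↔ ρ' i < ρ' j)) ∧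
        (∀ i, l[ρ i]? = l'[ρ' i]?)) := by
  unfold atomL
  constructor
  · intro h
    refine ⟨fun i j => ?_, fun i j => ?_, fun i => ?_⟩
    · exact iff_of_eq (congrArg (fun t => t.1 i j) h)
    · exact iff_of_eq (congrArg (fun t => t.2.1 i j) h)
    · exact congrArg (fun t => t.2.2 i) h
  · rintro ⟨h1, h2, h3⟩
    refine Prod.ext ?_ (Prod.ext ?_ ?_) <;> funext i <;> try funext j
    · exact propext (h1 i j)
    · exact propext (h2 i j)
    · exact h3 i

lemma ltype_atom {r : ℕ} {l l' : List A} {n : ℕ} {ρ ρ' : Fin (n + 1) → ℕ}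
    (h : ltype r l ρ = ltype r l' ρ') : atomL l ρ = atomL l' ρ' := by
  cases r with
  | zero => exact h
  | succ r => exact congrArg Prod.fst h

lemma ltype_succ_iff {r : ℕ} {l l' : List A} {n : ℕ} {ρ ρ' : Fin (n + 1) → ℕ} :
    ltype (r + 1) l ρ = ltype (r + 1) l' ρ' ↔
      (atomL l ρ = atomL l' ρ' ∧
        {t | ∃ m, m < ρ 0 ∧ m < l.length ∧ t = ltype r l (Fin.snoc ρ m)} =
        {t | ∃ m, m < ρ' 0 ∧ m < l'.length ∧ t = ltype r l' (Fin.snoc ρ' m)}) := by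
  show (_, _) = (_, _) ↔ _
  rw [Prod.mk.injEq]

lemma snoc_zero {n : ℕ} (ρ : Fin (n + 1) → ℕ) (m : ℕ) :
    (Fin.snoc ρ m : Fin (n + 2) → ℕ) 0 = ρ 0 := by
  have : (0 : Fin (n + 2)) = Fin.castSucc 0 := by simp
  rw [this, Fin.snoc_castSucc]

lemma pos_ofList {l : List A} {m : ℕ} : Word.pos (Word.ofList l) m ↔ m < l.length := by
  unfold Word.pos Word.ofList
  rw [ne_eq, List.getElem?_eq_none_iff]
  omega

/-- Types determine satisfaction (easy direction). -/
theorem ltype_sat : ∀ {n : ℕ} (φ : PFm A (n + 1)) (r : ℕ), φ.depth ≤ r →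
    ∀ (l l' : List A) (ρ ρ' : Fin (n + 1) → ℕ),
    ltype r l ρ = ltype r l' ρ' →
    (PFm.Sat (Word.ofList l) φ ρ ↔ PFm.Sat (Word.ofList l') φ ρ')
  | n, .eq i j, r, _, l, l', ρ, ρ', ht => (atomL_eq_iff.mp (ltype_atom ht)).1 i j
  | n, .lt i j, r, _, l, l', ρ, ρ', ht => (atomL_eq_iff.mp (ltype_atom ht)).2.1 i j
  | n, .letter a i, r, _, l, l', ρ, ρ', ht => by
      have h := (atomL_eq_iff.mp (ltype_atom ht)).2.2 i
      show l[ρ i]? = some a ↔ l'[ρ' i]? = some a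
      rw [h]
  | n, .and φ ψ, r, hd, l, l', ρ, ρ', ht => by
      have hd' : φ.depth ≤ r ∧ ψ.depth ≤ r := by
        simpa [PFm.depth, max_le_iff] using hd
      exact and_congr (ltype_sat φ r hd'.1 l l' ρ ρ' ht)
        (ltype_sat ψ r hd'.2 l l' ρ ρ' ht)
  | n, .not φ, r, hd, l, l', ρ, ρ', ht => by
      exact not_congr (ltype_sat φ r hd l l' ρ ρ' ht)
  | n, .exlt ψ, r, hd, l, l', ρ, ρ', ht => by
      cases r with
      | zero => simp [PFm.depth] at hd
      | succ r =>
        have hd' : ψ.depth ≤ r := by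
          simpa [PFm.depth] using hd
        have hset := (ltype_succ_iff.mp ht).2
        constructor
        · rintro ⟨m, hpos, hlt, hsat⟩
          have hmem : ltype r l (Fin.snoc ρ m) ∈
              {t | ∃ m, m < ρ 0 ∧ m < l.length ∧ t = ltype r l (Fin.snoc ρ m)} :=
            ⟨m, hlt, pos_ofList.mp hpos, rfl⟩
          rw [hset] at hmem
          obtain ⟨m', hm'1, hm'2, heq⟩ := hmem
          exact ⟨m', pos_ofList.mpr hm'2, hm'1,
            (ltype_sat ψ r hd' _ _ _ _ heq).mp hsat⟩
        · rintro ⟨m', hpos, hlt, hsat⟩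
          have hmem : ltype r l' (Fin.snoc ρ' m') ∈
              {t | ∃ m, m < ρ' 0 ∧ m < l'.length ∧ t = ltype r l' (Fin.snoc ρ' m)} :=
            ⟨m', hlt, pos_ofList.mp hpos, rfl⟩
          rw [← hset] at hmem
          obtain ⟨m, hm1, hm2, heq⟩ := hmem
          exact ⟨m, pos_ofList.mpr hm2, hm1,
            (ltype_sat ψ r hd' _ _ _ _ heq.symm).mpr hsat⟩

/-! ### Formula infrastructure -/

def fTrue {n : ℕ} : PFm A (n + 1) := .eq 0 0

def bigAnd {n : ℕ} : List (PFm A (n + 1)) → PFm A (n + 1)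
  | [] => fTrue
  | φ :: L => .and φ (bigAnd L)

lemma bigAnd_sat {w : Word A} {n : ℕ} {ρ : Fin (n + 1) → ℕ} :
    ∀ L : List (PFm A (n + 1)),
      (PFm.Sat w (bigAnd L) ρ ↔ ∀ φ ∈ L, PFm.Sat w φ ρ)
  | [] => by
      simp only [bigAnd, List.not_mem_nil, false_implies, implies_true, iff_true]
      show ρ 0 = ρ 0; rfl
  | φ :: L => by
      show PFm.Sat w φ ρ ∧ PFm.Sat w (bigAnd L) ρ ↔ _
      rw [bigAnd_sat L]
      constructor
      · rintro ⟨h1, h2⟩ ψ hψ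
        rcases List.mem_cons.mp hψ with rfl | h
        · exact h1
        · exact h2 ψ h
      · intro h
        exact ⟨h φ List.mem_cons_self, fun ψ hψ => h ψ (List.mem_cons_of_mem _ hψ)⟩

lemma bigAnd_depth {n : ℕ} {r : ℕ} :
    ∀ L : List (PFm A (n + 1)), (∀ φ ∈ L, PFm.depth φ ≤ r) → (bigAnd L).depth ≤ r
  | [] => fun _ => by
      show (PFm.depth (.eq 0 0) : ℕ) ≤ r
      simp [PFm.depth]
  | φ :: L => fun h => by
      show max φ.depth (bigAnd L).depth ≤ r
      exact max_le (h φ (by simp)) (bigAnd_depth L fun ψ hψ => h ψ (by simp [hψ]))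

def bigOr {n : ℕ} (L : List (PFm A (n + 1))) : PFm A (n + 1) :=
  .not (bigAnd (L.map .not))

lemma bigOr_sat {w : Word A} {n : ℕ} {ρ : Fin (n + 1) → ℕ} {L : List (PFm A (n + 1))} :
    PFm.Sat w (bigOr L) ρ ↔ ∃ φ ∈ L, PFm.Sat w φ ρ := by
  show ¬ PFm.Sat w (bigAnd (L.map .not)) ρ ↔ _
  rw [bigAnd_sat]
  constructor
  · intro h
    by_contra hc
    push_neg at hc
    exact h fun ψ hψ => by
      obtain ⟨φ, hφ, rfl⟩ := List.mem_map.mp hψ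
      exact hc φ hφ
  · rintro ⟨φ, hφ, hs⟩ h
    exact h (.not φ) (List.mem_map.mpr ⟨φ, hφ, rfl⟩) hs

lemma bigOr_depth {n : ℕ} {r : ℕ} {L : List (PFm A (n + 1))}
    (h : ∀ φ ∈ L, PFm.depth φ ≤ r) : (bigOr L).depth ≤ r := by
  show (bigAnd (L.map .not)).depth ≤ r
  refine bigAnd_depth _ fun ψ hψ => ?_
  obtain ⟨φ, hφ, rfl⟩ := List.mem_map.mp hψ
  exact h φ hφ

/-! ### Hintikka formulas -/

lemma atom_hintikka [Finite A] {n : ℕ} (l : List A) (ρ : Fin (n + 1) → ℕ) :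
    ∃ χ : PFm A (n + 1), χ.depth ≤ 0 ∧ ∀ (l' : List A) (ρ' : Fin (n + 1) → ℕ),
      (PFm.Sat (Word.ofList l') χ ρ' ↔ atomL l' ρ' = atomL l ρ) := by
  letI : Fintype A := Fintype.ofFinite A
  let idx : List (Fin (n + 1)) := List.finRange (n + 1)
  let allA : List A := (Finset.univ : Finset A).toList
  let eqF : Fin (n + 1) → Fin (n + 1) → PFm A (n + 1) := fun i j =>
    if ρ i = ρ j then .eq i j else .not (.eq i j)
  let ltF : Fin (n + 1) → Fin (n + 1) → PFm A (n + 1) := fun i j =>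
    if ρ i < ρ j then .lt i j else .not (.lt i j)
  let letF : Fin (n + 1) → PFm A (n + 1) := fun i =>
    (l[ρ i]?).elim (bigAnd (allA.map fun a => .not (.letter a i))) (fun a => .letter a i)
  refine ⟨.and (bigAnd (idx.map fun i => bigAnd (idx.map fun j => eqF i j)))
      (.and (bigAnd (idx.map fun i => bigAnd (idx.map fun j => ltF i j)))
        (bigAnd (idx.map letF))), ?_, ?_⟩
  · show max _ (max _ _) ≤ 0
    refine max_le (bigAnd_depth _ ?_) (max_le (bigAnd_depth _ ?_) (bigAnd_depth _ ?_)) <;>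
      intro ψ hψ <;> obtain ⟨i, hi, rfl⟩ := List.mem_map.mp hψ
    · refine bigAnd_depth _ fun ψ hψ => ?_
      obtain ⟨j, hj, rfl⟩ := List.mem_map.mp hψ
      by_cases h : ρ i = ρ j <;> simp [eqF, h, PFm.depth]
    · refine bigAnd_depth _ fun ψ hψ => ?_
      obtain ⟨j, hj, rfl⟩ := List.mem_map.mp hψ
      by_cases h : ρ i < ρ j <;> simp [ltF, h, PFm.depth]
    · show (letF i).depth ≤ 0
      cases h : l[ρ i]? with
      | none =>
        show ((l[ρ i]?).elim _ _ : PFm A (n+1)).depth ≤ 0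
        rw [h]
        refine bigAnd_depth _ fun ψ hψ => ?_
        obtain ⟨a, ha, rfl⟩ := List.mem_map.mp hψ
        simp [PFm.depth]
      | some a =>
        show ((l[ρ i]?).elim _ _ : PFm A (n+1)).depth ≤ 0
        rw [h]
        simp [PFm.depth]
  · intro l' ρ'
    show (PFm.Sat _ _ ρ' ∧ PFm.Sat _ _ ρ' ∧ PFm.Sat _ _ ρ') ↔ _
    rw [atomL_eq_iff, bigAnd_sat, bigAnd_sat, bigAnd_sat]
    have heqpart : (∀ ψ ∈ idx.map fun i => bigAnd (idx.map fun j => eqF i j),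
        PFm.Sat (Word.ofList l') ψ ρ') ↔ ∀ i j, (ρ' i = ρ' j ↔ ρ i = ρ j) := by
      constructor
      · intro h i j
        have := (bigAnd_sat _).mp (h _ (List.mem_map.mpr ⟨i, List.mem_finRange i, rfl⟩))
          (eqF i j) (List.mem_map.mpr ⟨j, List.mem_finRange j, rfl⟩)
        by_cases hij : ρ i = ρ j
        · simp only [eqF, if_pos hij] at this
          exact iff_of_true this hij
        · simp only [eqF, if_neg hij] at this
          exact iff_of_false this hij
      · intro h ψ hψ
        obtain ⟨i, _, rfl⟩ := List.mem_map.mp hψ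
        rw [bigAnd_sat]
        intro ψ hψ
        obtain ⟨j, _, rfl⟩ := List.mem_map.mp hψ
        by_cases hij : ρ i = ρ j
        · simp only [eqF, if_pos hij]
          exact (h i j).mpr hij
        · simp only [eqF, if_neg hij]
          exact fun hc => hij ((h i j).mp hc)
    have hltpart : (∀ ψ ∈ idx.map fun i => bigAnd (idx.map fun j => ltF i j),
        PFm.Sat (Word.ofList l') ψ ρ') ↔ ∀ i j, (ρ' i < ρ' j ↔ ρ i < ρ j) := by
      constructor
      · intro h i j
        have := (bigAnd_sat _).mp (h _ (List.mem_map.mpr ⟨i, List.mem_finRange i, rfl⟩))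
          (ltF i j) (List.mem_map.mpr ⟨j, List.mem_finRange j, rfl⟩)
        by_cases hij : ρ i < ρ j
        · simp only [ltF, if_pos hij] at this
          exact iff_of_true this hij
        · simp only [ltF, if_neg hij] at this
          exact iff_of_false this hij
      · intro h ψ hψ
        obtain ⟨i, _, rfl⟩ := List.mem_map.mp hψ
        rw [bigAnd_sat]
        intro ψ hψ
        obtain ⟨j, _, rfl⟩ := List.mem_map.mp hψ
        by_cases hij : ρ i < ρ j
        · simp only [ltF, if_pos hij]
          exact (h i j).mpr hij
        · simp only [ltF, if_neg hij]
          exact fun hc => hij ((h i j).mp hc)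
    have hletpart : (∀ ψ ∈ idx.map letF, PFm.Sat (Word.ofList l') ψ ρ') ↔
        ∀ i, l'[ρ' i]? = l[ρ i]? := by
      constructor
      · intro h i
        have := h (letF i) (List.mem_map.mpr ⟨i, List.mem_finRange i, rfl⟩)
        cases hc : l[ρ i]? with
        | none =>
          simp only [letF, hc, Option.elim] at this
          rw [bigAnd_sat] at this
          cases hc' : l'[ρ' i]? with
          | none => rfl
          | some a =>
            exfalso
            have hmem : a ∈ allA := Finset.mem_toList.mpr (Finset.mem_univ a)
            exact this _ (List.mem_map.mpr ⟨a, hmem, rfl⟩) hc'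
        | some a =>
          simp only [letF, hc, Option.elim] at this
          exact this
      · intro h ψ hψ
        obtain ⟨i, _, rfl⟩ := List.mem_map.mp hψ
        cases hc : l[ρ i]? with
        | none =>
          simp only [letF, hc, Option.elim]
          rw [bigAnd_sat]
          intro ψ hψ'
          obtain ⟨a, _, rfl⟩ := List.mem_map.mp hψ'
          show ¬ (Word.ofList l') (ρ' i) = some a
          show ¬ l'[ρ' i]? = some a
          rw [h i, hc]
          simp
        | some a =>
          simp only [letF, hc, Option.elim]
          show (Word.ofList l') (ρ' i) = some a
          show l'[ρ' i]? = some a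
          rw [h i, hc]
    rw [heqpart, hltpart, hletpart]

theorem hintikka [Finite A] (r : ℕ) : ∀ {n : ℕ} (l : List A) (ρ : Fin (n + 1) → ℕ),
    ∃ χ : PFm A (n + 1), χ.depth ≤ r ∧ ∀ (l' : List A) (ρ' : Fin (n + 1) → ℕ),
      (PFm.Sat (Word.ofList l') χ ρ' ↔ ltype r l' ρ' = ltype r l ρ) := by
  induction r with
  | zero =>
    intro n l ρ
    obtain ⟨χ, hd, hs⟩ := atom_hintikka l ρ
    exact ⟨χ, hd, fun l' ρ' => hs l' ρ'⟩
  | succ r IH =>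
    intro n l ρ
    obtain ⟨χ₀, hχ₀d, hχ₀⟩ := atom_hintikka l ρ
    have IH' : ∀ m : ℕ, ∃ χ : PFm A (n + 2), χ.depth ≤ r ∧
        ∀ (l' : List A) (ρ'' : Fin (n + 2) → ℕ),
          (PFm.Sat (Word.ofList l') χ ρ'' ↔ ltype r l' ρ'' = ltype r l (Fin.snoc ρ m)) :=
      fun m => IH l (Fin.snoc ρ m)
    choose f hfd hf using IH'
    set ext : List ℕ := List.range (min (ρ 0) l.length) with hext
    have hmemext : ∀ m, m ∈ ext ↔ (m < ρ 0 ∧ m < l.length) := by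
      intro m; rw [hext, List.mem_range]; omega
    refine ⟨.and χ₀ (.and (bigAnd (ext.map fun m => .exlt (f m)))
        (.not (.exlt (.not (bigOr (ext.map f)))))), ?_, ?_⟩
    · show max _ (max _ _) ≤ r + 1
      refine max_le (hχ₀d.trans (by omega)) (max_le (bigAnd_depth _ ?_) ?_)
      · intro ψ hψ
        obtain ⟨m, hm, rfl⟩ := List.mem_map.mp hψ
        show (f m).depth + 1 ≤ r + 1
        exact Nat.add_le_add_right (hfd m) 1
      · show (bigOr (ext.map f)).depth + 1 ≤ r + 1
        refine Nat.add_le_add_right (bigOr_depth ?_) 1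
        intro ψ hψ
        obtain ⟨m, hm, rfl⟩ := List.mem_map.mp hψ
        exact hfd m
    · intro l' ρ'
      show (PFm.Sat _ χ₀ ρ' ∧ PFm.Sat _ _ ρ' ∧
          ¬ (∃ m'', Word.pos _ m'' ∧ m'' < ρ' 0 ∧
            ¬ PFm.Sat _ (bigOr (ext.map f)) (Fin.snoc ρ' m''))) ↔ _
      rw [ltype_succ_iff, hχ₀ l' ρ', bigAnd_sat]
      constructor
      · rintro ⟨h0, hex, hall⟩
        refine ⟨h0, Set.ext fun t => ?_⟩
        push_neg at hall
        constructor
        · rintro ⟨m'', hm1, hm2, rfl⟩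
          have := hall m'' (pos_ofList.mpr hm2) hm1
          rw [bigOr_sat] at this
          obtain ⟨ψ, hψ, hs⟩ := this
          obtain ⟨m, hm, rfl⟩ := List.mem_map.mp hψ
          rw [hf m l' (Fin.snoc ρ' m'')] at hs
          exact ⟨m, (hmemext m).mp hm |>.1, ((hmemext m).mp hm).2, hs⟩
        · rintro ⟨m, hm1, hm2, rfl⟩
          have hmem : m ∈ ext := (hmemext m).mpr ⟨hm1, hm2⟩
          have := hex _ (List.mem_map.mpr ⟨m, hmem, rfl⟩)
          obtain ⟨m'', hpos, hlt, hsat⟩ := this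
          rw [hf m l' (Fin.snoc ρ' m'')] at hsat
          exact ⟨m'', hlt, pos_ofList.mp hpos, hsat.symm⟩
      · rintro ⟨hatom, hset⟩
        refine ⟨hatom, ?_, ?_⟩
        · intro ψ hψ
          obtain ⟨m, hm, rfl⟩ := List.mem_map.mp hψ
          obtain ⟨hm1, hm2⟩ := (hmemext m).mp hm
          have hmem : ltype r l (Fin.snoc ρ m) ∈
              {t | ∃ m', m' < ρ 0 ∧ m' < l.length ∧ t = ltype r l (Fin.snoc ρ m')} :=
            ⟨m, hm1, hm2, rfl⟩
          rw [← hset] at hmem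
          obtain ⟨m'', h1, h2, heq⟩ := hmem
          exact ⟨m'', pos_ofList.mpr h2, h1, (hf m l' (Fin.snoc ρ' m'')).mpr heq.symm⟩
        · rintro ⟨m'', hpos, hlt, hnsat⟩
          have hmem : ltype r l' (Fin.snoc ρ' m'') ∈
              {t | ∃ m', m' < ρ' 0 ∧ m' < l'.length ∧ t = ltype r l' (Fin.snoc ρ' m')} :=
            ⟨m'', hlt, pos_ofList.mp hpos, rfl⟩
          rw [hset] at hmem
          obtain ⟨m, hm1, hm2, heq⟩ := hmem
          refine hnsat (bigOr_sat.mpr ⟨f m, List.mem_map.mpr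
            ⟨m, (hmemext m).mpr ⟨hm1, hm2⟩, rfl⟩, ?_⟩)
          exact (hf m l' (Fin.snoc ρ' m'')).mpr heq

/-! ### Sentence level -/

def Stype (A : Type) (r : ℕ) (l : List A) : Set (LT A r 0) :=
  {t | ∃ m, m < l.length ∧ t = ltype r l (fun _ => m)}

lemma depth_pos : ∀ s : PSen A, 1 ≤ s.depth
  | .exB φ => by simp [PSen.depth]
  | .and s t => le_trans (depth_pos s) (le_max_left _ _)
  | .not s => depth_pos s

lemma tp_zero (w : Word A) : tp 0 w = ∅ := by
  ext s
  simp only [tp, Set.mem_setOf_eq, Set.mem_empty_iff_false, iff_false, not_and]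
  intro h
  exact absurd h (by have := depth_pos s; omega)

theorem tp_of_stype (r : ℕ) (l l' : List A) (h : Stype A r l = Stype A r l') :
    tp (r + 1) (Word.ofList l) = tp (r + 1) (Word.ofList l') := by
  have key : ∀ s : PSen A, s.depth ≤ r + 1 →
      (PSen.Sat (Word.ofList l) s ↔ PSen.Sat (Word.ofList l') s) := by
    intro s
    induction s with
    | exB φ =>
      intro hd
      have hφ : φ.depth ≤ r := by simpa [PSen.depth] using hd
      show (∃ m, Word.pos _ m ∧ _) ↔ (∃ m, Word.pos _ m ∧ _)
      constructor
      · rintro ⟨m, hpos, hsat⟩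
        have hmem : ltype r l (fun _ => m) ∈ Stype A r l :=
          ⟨m, pos_ofList.mp hpos, rfl⟩
        rw [h] at hmem
        obtain ⟨m', hm', heq⟩ := hmem
        exact ⟨m', pos_ofList.mpr hm', (ltype_sat φ r hφ l l' _ _ heq).mp hsat⟩
      · rintro ⟨m', hpos, hsat⟩
        have hmem : ltype r l' (fun _ => m') ∈ Stype A r l' :=
          ⟨m', pos_ofList.mp hpos, rfl⟩
        rw [← h] at hmem
        obtain ⟨m, hm, heq⟩ := hmem
        exact ⟨m, pos_ofList.mpr hm, (ltype_sat φ r hφ l l' _ _ heq.symm).mpr hsat⟩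
    | and s t ihs iht =>
      intro hd
      simp only [PSen.depth, max_le_iff] at hd
      exact and_congr (ihs hd.1) (iht hd.2)
    | not s ihs =>
      intro hd
      exact not_congr (ihs hd)
  ext s
  simp only [tp, Set.mem_setOf_eq]
  exact and_congr_right fun hd => key s hd

theorem stype_of_tp [Finite A] (r : ℕ) (l l' : List A)
    (h : tp (r + 1) (Word.ofList l) = tp (r + 1) (Word.ofList l')) :
    Stype A r l = Stype A r l' := by
  have key : ∀ (x y : List A), tp (r + 1) (Word.ofList x) = tp (r + 1) (Word.ofList y) →
      Stype A r x ⊆ Stype A r y := by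
    intro x y hxy t ht
    obtain ⟨m, hm, rfl⟩ := ht
    obtain ⟨χ, hχd, hχ⟩ := hintikka r x (fun _ => m)
    have hsat : PSen.Sat (Word.ofList x) (.exB χ) :=
      ⟨m, pos_ofList.mpr hm, (hχ x (fun _ => m)).mpr rfl⟩
    have hdep : (PSen.exB χ).depth ≤ r + 1 := by
      simpa [PSen.depth] using hχd
    have hmem : (PSen.exB χ) ∈ tp (r + 1) (Word.ofList x) := ⟨hdep, hsat⟩
    rw [hxy] at hmem
    obtain ⟨-, m', hpos, hsat'⟩ := hmem
    exact ⟨m', pos_ofList.mp hpos, ((hχ y (fun _ => m')).mp hsat').symm⟩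
  exact Set.Subset.antisymm (key l l' h) (key l' l h.symm)

/-! ### Structural lemmas about ltype -/

lemma getElem?_take' {l : List A} {n i : ℕ} (h : i < n) : (l.take n)[i]? = l[i]? := by
  rw [List.getElem?_take]; simp [h]

lemma getElem?_append' {l₁ l₂ : List A} {i : ℕ} (h : i < l₁.length) :
    (l₁ ++ l₂)[i]? = l₁[i]? := by
  rw [List.getElem?_append]; simp [h]

lemma snoc_ne_zero_lt {n : ℕ} {ρ : Fin (n + 1) → ℕ} {m : ℕ}
    (hρ : ∀ i, i ≠ 0 → ρ i < ρ 0) (hm : m < ρ 0) :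
    ∀ i : Fin (n + 2), i ≠ 0 →
      (Fin.snoc ρ m : Fin (n + 2) → ℕ) i < (Fin.snoc ρ m : Fin (n + 2) → ℕ) 0 := by
  intro i hi
  rw [snoc_zero]
  induction i using Fin.lastCases with
  | last => rw [Fin.snoc_last]; exact hm
  | cast j =>
    rw [Fin.snoc_castSucc]
    refine hρ j fun h0 => hi ?_
    rw [h0]; simp

theorem ltype_prefix (r : ℕ) : ∀ {n : ℕ} (u v : List A) (ρ : Fin (n + 1) → ℕ),
    (∀ i, ρ i < u.length) → ltype r (u ++ v) ρ = ltype r u ρ := by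
  induction r with
  | zero =>
    intro n u v ρ h
    show atomL (u ++ v) ρ = atomL u ρ
    exact atomL_eq_iff.mpr ⟨fun i j => Iff.rfl, fun i j => Iff.rfl,
      fun i => getElem?_append' (h i)⟩
  | succ r IH =>
    intro n u v ρ h
    rw [ltype_succ_iff]
    refine ⟨atomL_eq_iff.mpr ⟨fun i j => Iff.rfl, fun i j => Iff.rfl,
      fun i => getElem?_append' (h i)⟩, Set.ext fun t => ?_⟩
    have hsnoc : ∀ m, m < ρ 0 → ∀ i : Fin (n + 2),
        (Fin.snoc ρ m : Fin (n + 2) → ℕ) i < u.length := by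
      intro m hm i
      induction i using Fin.lastCases with
      | last => rw [Fin.snoc_last]; exact lt_trans hm (h 0)
      | cast j => rw [Fin.snoc_castSucc]; exact h j
    constructor
    · rintro ⟨m, hm1, _, rfl⟩
      exact ⟨m, hm1, lt_trans hm1 (h 0), (IH u v _ (hsnoc m hm1))⟩
    · rintro ⟨m, hm1, _, rfl⟩
      exact ⟨m, hm1, by simp [List.length_append]; omega,
        (IH u v _ (hsnoc m hm1)).symm⟩

lemma atom_core {n : ℕ} {u u' : List A} {ρ ρ' : Fin (n + 1) → ℕ}
    (hu : ρ 0 ≤ u.length) (hu' : ρ' 0 ≤ u'.length)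
    (hρ : ∀ i, i ≠ 0 → ρ i < ρ 0) (hρ' : ∀ i, i ≠ 0 → ρ' i < ρ' 0) :
    atomL u ρ = atomL u' ρ' ↔
      (u[ρ 0]? = u'[ρ' 0]? ∧ atomL (u.take (ρ 0)) ρ = atomL (u'.take (ρ' 0)) ρ') := by
  rw [atomL_eq_iff, atomL_eq_iff]
  constructor
  · rintro ⟨h1, h2, h3⟩
    refine ⟨h3 0, h1, h2, fun i => ?_⟩
    by_cases hi : i = 0
    · subst hi
      rw [List.getElem?_eq_none (by rw [List.length_take]; omega),
        List.getElem?_eq_none (by rw [List.length_take]; omega)]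
    · rw [getElem?_take' (hρ i hi), getElem?_take' (hρ' i hi)]; exact h3 i
  · rintro ⟨h0, h1, h2, h3⟩
    refine ⟨h1, h2, fun i => ?_⟩
    by_cases hi : i = 0
    · subst hi; exact h0
    · have := h3 i
      rw [getElem?_take' (hρ i hi), getElem?_take' (hρ' i hi)] at this; exact this

theorem core (r : ℕ) : ∀ {n : ℕ} (u u' : List A) (ρ ρ' : Fin (n + 1) → ℕ),
    ρ 0 ≤ u.length → ρ' 0 ≤ u'.length →
    (∀ i, i ≠ 0 → ρ i < ρ 0) → (∀ i, i ≠ 0 → ρ' i < ρ' 0) →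
    (ltype r u ρ = ltype r u' ρ' ↔
      (u[ρ 0]? = u'[ρ' 0]? ∧
        ltype r (u.take (ρ 0)) ρ = ltype r (u'.take (ρ' 0)) ρ')) := by
  induction r with
  | zero =>
    intro n u u' ρ ρ' hu hu' hρ hρ'
    show atomL u ρ = atomL u' ρ' ↔ (_ ∧ atomL _ ρ = atomL _ ρ')
    exact atom_core hu hu' hρ hρ'
  | succ r IH =>
    intro n u u' ρ ρ' hu hu' hρ hρ'
    have IHm : ∀ (m m' : ℕ), m < ρ 0 → m' < ρ' 0 →
        (ltype r u (Fin.snoc ρ m) = ltype r u' (Fin.snoc ρ' m') ↔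
          (u[ρ 0]? = u'[ρ' 0]? ∧
            ltype r (u.take (ρ 0)) (Fin.snoc ρ m) =
            ltype r (u'.take (ρ' 0)) (Fin.snoc ρ' m'))) := by
      intro m m' hm hm'
      have h1 := IH u u' (Fin.snoc ρ m) (Fin.snoc ρ' m')
        (by rw [snoc_zero]; exact hu) (by rw [snoc_zero]; exact hu')
        (snoc_ne_zero_lt hρ hm) (snoc_ne_zero_lt hρ' hm')
      simpa only [snoc_zero] using h1
    rw [ltype_succ_iff, ltype_succ_iff, atom_core hu hu' hρ hρ']
    have hlen : (u.take (ρ 0)).length = ρ 0 := by rw [List.length_take]; omega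
    have hlen' : (u'.take (ρ' 0)).length = ρ' 0 := by rw [List.length_take]; omega
    have hsets : u[ρ 0]? = u'[ρ' 0]? →
        ({t | ∃ m, m < ρ 0 ∧ m < u.length ∧ t = ltype r u (Fin.snoc ρ m)} =
         {t | ∃ m, m < ρ' 0 ∧ m < u'.length ∧ t = ltype r u' (Fin.snoc ρ' m)} ↔
         {t | ∃ m, m < ρ 0 ∧ m < (u.take (ρ 0)).length ∧
            t = ltype r (u.take (ρ 0)) (Fin.snoc ρ m)} =
         {t | ∃ m, m < ρ' 0 ∧ m < (u'.take (ρ' 0)).length ∧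
            t = ltype r (u'.take (ρ' 0)) (Fin.snoc ρ' m)}) := by
      intro h0
      constructor
      · intro hS
        ext t
        constructor
        · rintro ⟨m, hm1, _, rfl⟩
          have hmem : ltype r u (Fin.snoc ρ m) ∈
              {t | ∃ m, m < ρ 0 ∧ m < u.length ∧ t = ltype r u (Fin.snoc ρ m)} :=
            ⟨m, hm1, by omega, rfl⟩
          rw [hS] at hmem
          obtain ⟨m', a1, _, heq⟩ := hmem
          exact ⟨m', a1, by omega,
            ((IHm m m' hm1 a1).mp heq).2⟩
        · rintro ⟨m', hm1, _, rfl⟩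
          have hmem : ltype r u' (Fin.snoc ρ' m') ∈
              {t | ∃ m, m < ρ' 0 ∧ m < u'.length ∧ t = ltype r u' (Fin.snoc ρ' m)} :=
            ⟨m', hm1, by omega, rfl⟩
          rw [← hS] at hmem
          obtain ⟨m, a1, _, heq⟩ := hmem
          exact ⟨m, a1, by omega, ((IHm m m' a1 hm1).mp heq.symm).2.symm⟩
      · intro hT
        ext t
        constructor
        · rintro ⟨m, hm1, _, rfl⟩
          have hmem : ltype r (u.take (ρ 0)) (Fin.snoc ρ m) ∈
              {t | ∃ m, m < ρ 0 ∧ m < (u.take (ρ 0)).length ∧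
                t = ltype r (u.take (ρ 0)) (Fin.snoc ρ m)} :=
            ⟨m, hm1, by omega, rfl⟩
          rw [hT] at hmem
          obtain ⟨m', a1, _, heq⟩ := hmem
          exact ⟨m', a1, by omega, (IHm m m' hm1 a1).mpr ⟨h0, heq⟩⟩
        · rintro ⟨m', hm1, _, rfl⟩
          have hmem : ltype r (u'.take (ρ' 0)) (Fin.snoc ρ' m') ∈
              {t | ∃ m, m < ρ' 0 ∧ m < (u'.take (ρ' 0)).length ∧
                t = ltype r (u'.take (ρ' 0)) (Fin.snoc ρ' m)} :=
            ⟨m', hm1, by omega, rfl⟩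
          rw [← hT] at hmem
          obtain ⟨m, a1, _, heq⟩ := hmem
          exact ⟨m, a1, by omega, ((IHm m m' a1 hm1).mpr ⟨h0, heq.symm⟩).symm⟩
    constructor
    · rintro ⟨⟨h0, hY⟩, hS⟩
      exact ⟨h0, hY, (hsets h0).mp hS⟩
    · rintro ⟨h0, hY, hT⟩
      exact ⟨⟨h0, hY⟩, (hsets h0).mpr hT⟩

theorem reidx (r : ℕ) : ∀ {n₁ n₂ : ℕ} (h : Fin (n₂ + 1) → Fin (n₁ + 1)), h 0 = 0 →
    ∀ (u u' : List A) (ρ ρ' : Fin (n₁ + 1) → ℕ),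
    ltype r u ρ = ltype r u' ρ' → ltype r u (ρ ∘ h) = ltype r u' (ρ' ∘ h) := by
  induction r with
  | zero =>
    intro n₁ n₂ h h0 u u' ρ ρ' ht
    obtain ⟨h1, h2, h3⟩ := atomL_eq_iff.mp (ltype_atom ht)
    show atomL u (ρ ∘ h) = atomL u' (ρ' ∘ h)
    exact atomL_eq_iff.mpr ⟨fun i j => h1 (h i) (h j), fun i j => h2 (h i) (h j),
      fun i => h3 (h i)⟩
  | succ r IH =>
    intro n₁ n₂ h h0 u u' ρ ρ' ht
    rw [ltype_succ_iff] at ht ⊢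
    obtain ⟨hatom, hset⟩ := ht
    obtain ⟨h1, h2, h3⟩ := atomL_eq_iff.mp hatom
    refine ⟨atomL_eq_iff.mpr ⟨fun i j => h1 (h i) (h j), fun i j => h2 (h i) (h j),
      fun i => h3 (h i)⟩, ?_⟩
    have hcomp0 : (ρ ∘ h) 0 = ρ 0 := by simp [h0]
    have hcomp0' : (ρ' ∘ h) 0 = ρ' 0 := by simp [h0]
    set h' : Fin (n₂ + 2) → Fin (n₁ + 2) :=
      Fin.lastCases (Fin.last (n₁ + 1)) (fun i => (h i).castSucc) with hh'def
    have hh'0 : h' 0 = 0 := by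
      have : (0 : Fin (n₂ + 2)) = Fin.castSucc 0 := by simp
      rw [this, hh'def]
      simp only [Fin.lastCases_castSucc]
      rw [h0]; simp
    have hcompsnoc : ∀ (σ : Fin (n₁ + 1) → ℕ) (m : ℕ),
        (Fin.snoc σ m : Fin (n₁ + 2) → ℕ) ∘ h' = Fin.snoc (σ ∘ h) m := by
      intro σ m
      funext j
      induction j using Fin.lastCases with
      | last => simp [hh'def, Fin.lastCases_last, Fin.snoc_last]
      | cast i => simp [hh'def, Fin.lastCases_castSucc, Fin.snoc_castSucc]
    ext t
    constructor
    · rintro ⟨m, hm1, hm2, rfl⟩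
      rw [hcomp0] at hm1
      have hmem : ltype r u (Fin.snoc ρ m) ∈
          {t | ∃ m, m < ρ 0 ∧ m < u.length ∧ t = ltype r u (Fin.snoc ρ m)} :=
        ⟨m, hm1, hm2, rfl⟩
      rw [hset] at hmem
      obtain ⟨m', a1, a2, heq⟩ := hmem
      refine ⟨m', by rw [hcomp0']; exact a1, a2, ?_⟩
      have := IH h' hh'0 u u' _ _ heq
      rw [hcompsnoc, hcompsnoc] at this
      exact this
    · rintro ⟨m', hm1, hm2, rfl⟩
      rw [hcomp0'] at hm1
      have hmem : ltype r u' (Fin.snoc ρ' m') ∈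
          {t | ∃ m, m < ρ' 0 ∧ m < u'.length ∧ t = ltype r u' (Fin.snoc ρ' m)} :=
        ⟨m', hm1, hm2, rfl⟩
      rw [← hset] at hmem
      obtain ⟨m, a1, a2, heq⟩ := hmem
      refine ⟨m, by rw [hcomp0]; exact a1, a2, ?_⟩
      have := IH h' hh'0 u u' _ _ heq.symm
      rw [hcompsnoc, hcompsnoc] at this
      exact this.symm

theorem dup (r : ℕ) {n : ℕ} (u u' : List A) (ρ ρ' : Fin (n + 1) → ℕ)
    (h : ltype r u ρ = ltype r u' ρ') :
    ltype r u (Fin.snoc ρ (ρ 0)) = ltype r u' (Fin.snoc ρ' (ρ' 0)) := by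
  set g : Fin (n + 2) → Fin (n + 1) := Fin.lastCases 0 (fun i => i) with hgdef
  have hg0 : g 0 = 0 := by
    have : (0 : Fin (n + 2)) = Fin.castSucc 0 := by simp
    rw [this, hgdef]
    simp only [Fin.lastCases_castSucc]
  have hgcomp : ∀ (σ : Fin (n + 1) → ℕ), σ ∘ g = Fin.snoc σ (σ 0) := by
    intro σ
    funext j
    induction j using Fin.lastCases with
    | last => simp [hgdef, Fin.lastCases_last, Fin.snoc_last]
    | cast i => simp [hgdef, Fin.lastCases_castSucc, Fin.snoc_castSucc]
  have := reidx r g hg0 u u' ρ ρ' h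
  rwa [hgcomp, hgcomp] at this

theorem trunc (r : ℕ) : ∀ {n : ℕ} (u u' : List A) (ρ ρ' : Fin (n + 1) → ℕ),
    ltype (r + 1) u ρ = ltype (r + 1) u' ρ' → ltype r u ρ = ltype r u' ρ' := by
  induction r with
  | zero =>
    intro n u u' ρ ρ' h
    show atomL u ρ = atomL u' ρ'
    exact ltype_atom h
  | succ r IH =>
    intro n u u' ρ ρ' h
    rw [ltype_succ_iff] at h ⊢
    obtain ⟨hatom, hset⟩ := h
    refine ⟨hatom, ?_⟩
    ext t
    constructor
    · rintro ⟨m, hm1, hm2, rfl⟩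
      have hmem : ltype (r + 1) u (Fin.snoc ρ m) ∈
          {t | ∃ m, m < ρ 0 ∧ m < u.length ∧ t = ltype (r + 1) u (Fin.snoc ρ m)} :=
        ⟨m, hm1, hm2, rfl⟩
      rw [hset] at hmem
      obtain ⟨m', a1, a2, heq⟩ := hmem
      exact ⟨m', a1, a2, IH u u' _ _ heq⟩
    · rintro ⟨m', hm1, hm2, rfl⟩
      have hmem : ltype (r + 1) u' (Fin.snoc ρ' m') ∈
          {t | ∃ m, m < ρ' 0 ∧ m < u'.length ∧ t = ltype (r + 1) u' (Fin.snoc ρ' m)} :=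
        ⟨m', hm1, hm2, rfl⟩
      rw [← hset] at hmem
      obtain ⟨m, a1, a2, heq⟩ := hmem
      exact ⟨m, a1, a2, IH u' u _ _ heq⟩

/-! ### One-letter append congruence -/

def hat (L : ℕ) {n : ℕ} (ρ : Fin (n + 1) → ℕ) : Fin (n + 1) → ℕ := fun i => min (ρ i) L

lemma hat_snoc {L : ℕ} {n : ℕ} (ρ : Fin (n + 1) → ℕ) (m : ℕ) :
    hat L (Fin.snoc ρ m : Fin (n + 2) → ℕ) = Fin.snoc (hat L ρ) (min m L) := by
  funext j
  induction j using Fin.lastCases with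
  | last => simp [hat, Fin.snoc_last]
  | cast i => simp [hat, Fin.snoc_castSucc]

lemma app_atom {n : ℕ} (w w' : List A) (c : A) (ρ ρ' : Fin (n + 1) → ℕ)
    (h0 : ρ 0 = w.length + 1) (h0' : ρ' 0 = w'.length + 1)
    (hb : ∀ i, i ≠ 0 → ρ i ≤ w.length) (hb' : ∀ i, i ≠ 0 → ρ' i ≤ w'.length)
    (hm : ∀ i, i ≠ 0 → (ρ i = w.length ↔ ρ' i = w'.length))
    (h : atomL w (hat w.length ρ) = atomL w' (hat w'.length ρ')) :
    atomL (w ++ [c]) ρ = atomL (w' ++ [c]) ρ' := by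
  rw [atomL_eq_iff] at h ⊢
  obtain ⟨h1, h2, h3⟩ := h
  have hv : ∀ i, i ≠ 0 → hat w.length ρ i = ρ i := by
    intro i hi; simp only [hat]; exact min_eq_left (hb i hi)
  have hv' : ∀ i, i ≠ 0 → hat w'.length ρ' i = ρ' i := by
    intro i hi; simp only [hat]; exact min_eq_left (hb' i hi)
  refine ⟨fun i j => ?_, fun i j => ?_, fun i => ?_⟩
  · by_cases hi : i = 0 <;> by_cases hj : j = 0
    · subst hi; subst hj; exact iff_of_true rfl rfl
    · subst hi
      refine iff_of_false ?_ ?_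
      · have := hb j hj; omega
      · have := hb' j hj; omega
    · subst hj
      refine iff_of_false ?_ ?_
      · have := hb i hi; omega
      · have := hb' i hi; omega
    · have := h1 i j
      rwa [hv i hi, hv j hj, hv' i hi, hv' j hj] at this
  · by_cases hi : i = 0 <;> by_cases hj : j = 0
    · subst hi; subst hj; exact iff_of_false (lt_irrefl _) (lt_irrefl _)
    · subst hi
      refine iff_of_false ?_ ?_
      · have := hb j hj; omega
      · have := hb' j hj; omega
    · subst hj
      refine iff_of_true ?_ ?_
      · have := hb i hi; omega
      · have := hb' i hi; omega
    · have := h2 i j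
      rwa [hv i hi, hv j hj, hv' i hi, hv' j hj] at this
  · by_cases hi : i = 0
    · subst hi
      rw [List.getElem?_eq_none (by simp [List.length_append]; omega),
        List.getElem?_eq_none (by simp [List.length_append]; omega)]
    · by_cases hiw : ρ i = w.length
      · have hiw' : ρ' i = w'.length := (hm i hi).mp hiw
        rw [hiw, hiw', List.getElem?_concat_length, List.getElem?_concat_length]
      · have hiw' : ¬ ρ' i = w'.length := fun hc => hiw ((hm i hi).mpr hc)
        have hlt : ρ i < w.length := by have := hb i hi; omega
        have hlt' : ρ' i < w'.length := by have := hb' i hi; omega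
        rw [getElem?_append' hlt, getElem?_append' hlt']
        have := h3 i
        rwa [hv i hi, hv' i hi] at this

theorem app (r : ℕ) : ∀ {n : ℕ} (w w' : List A) (c : A) (ρ ρ' : Fin (n + 1) → ℕ),
    ρ 0 = w.length + 1 → ρ' 0 = w'.length + 1 →
    (∀ i, i ≠ 0 → ρ i ≤ w.length) → (∀ i, i ≠ 0 → ρ' i ≤ w'.length) →
    (∀ i, i ≠ 0 → (ρ i = w.length ↔ ρ' i = w'.length)) →
    ltype r w (hat w.length ρ) = ltype r w' (hat w'.length ρ') →
    ltype r (w ++ [c]) ρ = ltype r (w' ++ [c]) ρ' := by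
  induction r with
  | zero =>
    intro n w w' c ρ ρ' h0 h0' hb hb' hm h
    exact app_atom w w' c ρ ρ' h0 h0' hb hb' hm h
  | succ r IH =>
    have incl : ∀ {n : ℕ} (w w' : List A) (c : A) (ρ ρ' : Fin (n + 1) → ℕ),
        ρ 0 = w.length + 1 → ρ' 0 = w'.length + 1 →
        (∀ i, i ≠ 0 → ρ i ≤ w.length) → (∀ i, i ≠ 0 → ρ' i ≤ w'.length) →
        (∀ i, i ≠ 0 → (ρ i = w.length ↔ ρ' i = w'.length)) →
        ltype (r + 1) w (hat w.length ρ) = ltype (r + 1) w' (hat w'.length ρ') →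
        {t | ∃ m, m < ρ 0 ∧ m < (w ++ [c]).length ∧
          t = ltype r (w ++ [c]) (Fin.snoc ρ m)} ⊆
        {t | ∃ m, m < ρ' 0 ∧ m < (w' ++ [c]).length ∧
          t = ltype r (w' ++ [c]) (Fin.snoc ρ' m)} := by
      intro n w w' c ρ ρ' h0 h0' hb hb' hm h
      have hhat0 : hat w.length ρ 0 = w.length := by
        simp only [hat, h0]; omega
      have hhat0' : hat w'.length ρ' 0 = w'.length := by
        simp only [hat, h0']; omega
      rintro t ⟨m, hm1, hm2, rfl⟩
      have hmle : m ≤ w.length := by rw [h0] at hm1; omega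
      -- side conditions for the extended assignments
      have hsnb : ∀ (m' : ℕ), m' ≤ w.length →
          ∀ i : Fin (n + 2), i ≠ 0 → (Fin.snoc ρ m' : Fin (n + 2) → ℕ) i ≤ w.length := by
        intro m' hm' i hi
        induction i using Fin.lastCases with
        | last => rw [Fin.snoc_last]; exact hm'
        | cast j =>
          rw [Fin.snoc_castSucc]
          exact hb j fun hc => hi (by rw [hc]; simp)
      have hsnb' : ∀ (m' : ℕ), m' ≤ w'.length →
          ∀ i : Fin (n + 2), i ≠ 0 → (Fin.snoc ρ' m' : Fin (n + 2) → ℕ) i ≤ w'.length := by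
        intro m' hm' i hi
        induction i using Fin.lastCases with
        | last => rw [Fin.snoc_last]; exact hm'
        | cast j =>
          rw [Fin.snoc_castSucc]
          exact hb' j fun hc => hi (by rw [hc]; simp)
      by_cases hcase : m = w.length
      · subst hcase
        -- the new pebble sits on the appended letter; mirror with w'.length
        have hbase := dup r w w' _ _ (trunc r w w' _ _ h)
        rw [hhat0, hhat0'] at hbase
        have hIH := IH w w' c (Fin.snoc ρ w.length) (Fin.snoc ρ' w'.length)
          (by rw [snoc_zero]; exact h0) (by rw [snoc_zero]; exact h0')
          (hsnb _ le_rfl) (hsnb' _ le_rfl)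
          (fun i hi => ?_) ?_
        · exact ⟨w'.length, by omega, by simp [List.length_append], hIH⟩
        · -- matching condition
          induction i using Fin.lastCases with
          | last => simp [Fin.snoc_last]
          | cast j =>
            rw [Fin.snoc_castSucc, Fin.snoc_castSucc]
            exact hm j fun hc => hi (by rw [hc]; simp)
        · -- hat precondition
          rw [hat_snoc, hat_snoc, min_self, min_self]
          exact hbase
      · have hmlt : m < w.length := by omega
        -- use the set component of h
        have hset := (ltype_succ_iff.mp h).2
        have hmem : ltype r w (Fin.snoc (hat w.length ρ) m) ∈
            {t | ∃ m', m' < hat w.length ρ 0 ∧ m' < w.length ∧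
              t = ltype r w (Fin.snoc (hat w.length ρ) m')} :=
          ⟨m, by rw [hhat0]; exact hmlt, hmlt, rfl⟩
        rw [hset] at hmem
        obtain ⟨m', a1, a2, heq⟩ := hmem
        rw [hhat0'] at a1
        have hIH := IH w w' c (Fin.snoc ρ m) (Fin.snoc ρ' m')
          (by rw [snoc_zero]; exact h0) (by rw [snoc_zero]; exact h0')
          (hsnb _ hmle) (hsnb' _ (le_of_lt a1))
          (fun i hi => ?_) ?_
        · exact ⟨m', by omega, by simp [List.length_append]; omega, hIH⟩
        · -- matching condition
          induction i using Fin.lastCases with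
          | last =>
            rw [Fin.snoc_last, Fin.snoc_last]
            constructor <;> intro hc <;> omega
          | cast j =>
            rw [Fin.snoc_castSucc, Fin.snoc_castSucc]
            exact hm j fun hc => hi (by rw [hc]; simp)
        · -- hat precondition
          rw [hat_snoc, hat_snoc, min_eq_left hmle, min_eq_left (le_of_lt a1)]
          exact heq
    intro n w w' c ρ ρ' h0 h0' hb hb' hm h
    rw [ltype_succ_iff]
    refine ⟨app_atom w w' c ρ ρ' h0 h0' hb hb' hm (ltype_atom h), ?_⟩
    exact Set.Subset.antisymm
      (incl w w' c ρ ρ' h0 h0' hb hb' hm h)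
      (incl w' w c ρ' ρ h0' h0 hb' hb (fun i hi => (hm i hi).symm) h.symm)

/-! ### Full types of words and the walk argument -/

def Fty (r : ℕ) (l : List A) : LT A r 0 := ltype r l (fun _ => l.length)

theorem fty_append (r : ℕ) (w w' : List A) (c : A) (h : Fty r w = Fty r w') :
    Fty r (w ++ [c]) = Fty r (w' ++ [c]) := by
  have h1 : hat w.length (fun _ : Fin 1 => w.length + 1) = (fun _ : Fin 1 => w.length) := by
    funext i; simp [hat]
  have h1' : hat w'.length (fun _ : Fin 1 => w'.length + 1) = (fun _ : Fin 1 => w'.length) := by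
    funext i; simp [hat]
  have happ := app r w w' c (fun _ => w.length + 1) (fun _ => w'.length + 1) rfl rfl
    (fun i hi => absurd (Fin.fin_one_eq_zero i) hi)
    (fun i hi => absurd (Fin.fin_one_eq_zero i) hi)
    (fun i hi => absurd (Fin.fin_one_eq_zero i) hi)
    (by rw [h1, h1']; exact h)
  show ltype r (w ++ [c]) (fun _ => (w ++ [c]).length) = ltype r (w' ++ [c]) (fun _ => (w' ++ [c]).length)
  have hl : (w ++ [c]).length = w.length + 1 := by simp
  have hl' : (w' ++ [c]).length = w'.length + 1 := by simp
  rw [hl, hl']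
  exact happ

theorem edge_eq (r : ℕ) (x y : List A) (c : A) (h : Fty r x = Fty r y) :
    ltype r (x ++ [c]) (fun _ : Fin 1 => x.length) =
    ltype r (y ++ [c]) (fun _ : Fin 1 => y.length) := by
  have hcore := core r (x ++ [c]) (y ++ [c])
    (fun _ : Fin 1 => x.length) (fun _ : Fin 1 => y.length)
    (by simp) (by simp)
    (fun i hi => absurd (Fin.fin_one_eq_zero i) hi)
    (fun i hi => absurd (Fin.fin_one_eq_zero i) hi)
  refine hcore.mpr ⟨?_, ?_⟩
  · rw [List.getElem?_concat_length, List.getElem?_concat_length]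
  · rw [show (x ++ [c]).take x.length = x from List.take_left,
      show (y ++ [c]).take y.length = y from List.take_left]
    exact h

theorem stype_step (r : ℕ) (x : List A) (c : A) :
    Stype A r (x ++ [c]) =
      Stype A r x ∪ {ltype r (x ++ [c]) (fun _ : Fin 1 => x.length)} := by
  ext t
  constructor
  · rintro ⟨m, hm, rfl⟩
    rw [List.length_append] at hm
    simp only [List.length_singleton] at hm
    by_cases hcase : m = x.length
    · subst hcase; right; rfl
    · left
      have hmlt : m < x.length := by omega
      exact ⟨m, hmlt, (ltype_prefix r x [c] _ (fun i => hmlt))⟩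
  · rintro (⟨m, hm, rfl⟩ | ht)
    · exact ⟨m, by simp; omega, (ltype_prefix r x [c] _ (fun i => hm)).symm⟩
    · rw [ht]
      exact ⟨x.length, by simp, rfl⟩

theorem stype_mono (r : ℕ) (u v : List A) : Stype A r u ⊆ Stype A r (u ++ v) := by
  rintro t ⟨m, hm, rfl⟩
  exact ⟨m, by simp; omega, (ltype_prefix r u v _ (fun i => hm)).symm⟩

theorem extend_both (r : ℕ) :
    ∀ (z x y : List A), Fty r x = Fty r y →
      ∃ D : Set (LT A r 0),
        Stype A r (x ++ z) = Stype A r x ∪ D ∧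
        Stype A r (y ++ z) = Stype A r y ∪ D ∧
        Fty r (x ++ z) = Fty r (y ++ z) := by
  intro z
  induction z with
  | nil =>
    intro x y h
    refine ⟨∅, by simp, by simp, ?_⟩
    rw [List.append_nil, List.append_nil]
    exact h
  | cons c z IH =>
    intro x y h
    have hx : x ++ (c :: z) = (x ++ [c]) ++ z := by
      rw [List.append_cons]
    have hy : y ++ (c :: z) = (y ++ [c]) ++ z := by
      rw [List.append_cons]
    obtain ⟨D, hD1, hD2, hD3⟩ := IH (x ++ [c]) (y ++ [c]) (fty_append r x y c h)
    have hedge : ltype r (x ++ [c]) (fun _ : Fin 1 => x.length) =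
        ltype r (y ++ [c]) (fun _ : Fin 1 => y.length) := edge_eq r x y c h
    refine ⟨{ltype r (x ++ [c]) (fun _ : Fin 1 => x.length)} ∪ D, ?_, ?_, ?_⟩
    · rw [hx, hD1, stype_step, Set.union_assoc]
    · rw [hy, hD2, stype_step, hedge, Set.union_assoc]
    · rw [hx, hy]; exact hD3

lemma stype_nil_empty (r : ℕ) : Stype A r ([] : List A) = ∅ := by
  ext t
  simp only [Stype, List.length_nil, Set.mem_setOf_eq, Set.mem_empty_iff_false, iff_false]
  rintro ⟨m, hm, -⟩
  omega

lemma eq_nil_of_stype_empty {r : ℕ} {w : List A} (h : Stype A r w = ∅) : w = [] := by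
  by_contra hw
  have hpos : 0 < w.length := List.length_pos_iff.mpr hw
  have : ltype r w (fun _ : Fin 1 => 0) ∈ Stype A r w := ⟨0, hpos, rfl⟩
  rw [h] at this
  exact this

theorem reach (r : ℕ) (w w' : List A) (hw : w ≠ [])
    (h : Stype A r w = Stype A r w') :
    ∃ m, m < w.length ∧ Fty r w' = Fty r (w.take (m + 1)) := by
  have hw' : w' ≠ [] := by
    intro hc
    subst hc
    rw [stype_nil_empty] at h
    exact hw (eq_nil_of_stype_empty h)
  have hL' : 0 < w'.length := List.length_pos_iff.mpr hw'
  have he : ltype r w' (fun _ : Fin 1 => w'.length - 1) ∈ Stype A r w' :=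
    ⟨w'.length - 1, by omega, rfl⟩
  rw [← h] at he
  obtain ⟨m, hm, heq⟩ := he
  -- heq : ltype r w' (const (L'-1)) = ltype r w (const m)
  have hcore := (core r w' w (fun _ : Fin 1 => w'.length - 1) (fun _ : Fin 1 => m)
    (by show w'.length - 1 ≤ w'.length; omega) (by show m ≤ w.length; omega)
    (fun i hi => absurd (Fin.fin_one_eq_zero i) hi)
    (fun i hi => absurd (Fin.fin_one_eq_zero i) hi)).mp heq
  obtain ⟨hlet, hpre⟩ := hcore
  have hlen1 : (w'.take (w'.length - 1)).length = w'.length - 1 := by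
    rw [List.length_take]; omega
  have hlen2 : (w.take m).length = m := by rw [List.length_take]; omega
  have hpreF : Fty r (w'.take (w'.length - 1)) = Fty r (w.take m) := by
    unfold Fty
    rw [hlen1, hlen2]
    exact hpre
  have hgl : w'[w'.length - 1]? = some (w'[w'.length - 1]'(by omega)) :=
    List.getElem?_eq_getElem (by omega)
  have hgm : w[m]? = some (w[m]'hm) := List.getElem?_eq_getElem hm
  have hletters : w'[w'.length - 1]'(by omega) = w[m]'hm := by
    rw [hgl, hgm] at hlet
    exact Option.some.inj hlet
  have hw'split : w' = w'.take (w'.length - 1) ++ [w'[w'.length - 1]'(by omega)] := by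
    calc w' = w'.take w'.length := List.take_length.symm
      _ = w'.take ((w'.length - 1) + 1) := by congr 1; omega
      _ = w'.take (w'.length - 1) ++ (w'[w'.length - 1]?).toList := List.take_succ
      _ = _ := by rw [hgl]; rfl
  have hwsplit : w.take (m + 1) = w.take m ++ [w[m]'hm] := by
    calc w.take (m + 1) = w.take m ++ (w[m]?).toList := List.take_succ
      _ = _ := by rw [hgm]; rfl
  refine ⟨m, hm, ?_⟩
  calc Fty r w' = Fty r (w'.take (w'.length - 1) ++ [w'[w'.length - 1]'(by omega)]) := by
        rw [← hw'split]
    _ = Fty r (w.take m ++ [w[m]'hm]) := by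
        rw [hletters]
        exact fty_append r _ _ _ hpreF
    _ = Fty r (w.take (m + 1)) := by rw [← hwsplit]

theorem stype_extend (r : ℕ) (w w' v : List A) (h : Stype A r w = Stype A r w') :
    ∃ v', Stype A r (w' ++ v') = Stype A r (w ++ v) := by
  by_cases hw : w = []
  · subst hw
    rw [stype_nil_empty] at h
    rw [eq_nil_of_stype_empty h.symm]
    exact ⟨v, rfl⟩
  · obtain ⟨m, hm, hft⟩ := reach r w w' hw h
    set p := w.take (m + 1) with hp
    set z := w.drop (m + 1) with hzdef
    have hpz : p ++ z = w := List.take_append_drop _ w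
    obtain ⟨D, hD1, hD2, hD3⟩ := extend_both r z w' p hft
    rw [hpz] at hD2 hD3
    have hDsub : D ⊆ Stype A r w := fun t ht => by rw [hD2]; exact Or.inr ht
    have hWZ : Stype A r (w' ++ z) = Stype A r w := by
      rw [hD1, ← h]
      exact Set.union_eq_left.mpr hDsub
    obtain ⟨D₂, hE1, hE2, -⟩ := extend_both r v (w' ++ z) w hD3
    refine ⟨z ++ v, ?_⟩
    rw [← List.append_assoc, hE1, hWZ, hE2]

theorem tp_extend {A : Type} [Finite A] (k : ℕ) (w w' v : List A)
    (h : tp k (Word.ofList w) = tp k (Word.ofList w')) :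
    ∃ v', tp k (Word.ofList (w' ++ v')) = tp k (Word.ofList (w ++ v)) := by
  cases k with
  | zero => exact ⟨v, by rw [tp_zero, tp_zero]⟩
  | succ r =>
    obtain ⟨v', hv⟩ := stype_extend r w w' v (stype_of_tp r w w' h)
    exact ⟨v', tp_of_stype r _ _ hv⟩

end PrefSynth

namespace PrefSynth

/-- The relation `⪯` is a partial order on `Types_k`
(reflexive, transitive and antisymmetric), whose minimum is the type of the
empty word. -/
theorem typeLe_partialOrder {A : Type} [Finite A] (k : ℕ) :
    (∀ τ ∈ WTypes A k, typeLe k τ τ) ∧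
    (∀ τ τ' τ'' : Set (PSen A), typeLe k τ τ' → typeLe k τ' τ'' → typeLe k τ τ'') ∧
    (∀ τ τ' : Set (PSen A), typeLe k τ τ' → typeLe k τ' τ → τ = τ') ∧
    (∀ τ ∈ WTypes A k, typeLe k (tp k (Word.ofList ([] : List A))) τ) := by
  refine ⟨?_, ?_, ?_, ?_⟩
  · rintro τ ⟨l, rfl⟩
    exact ⟨l, [], rfl, by rw [List.append_nil]⟩
  · rintro τ τ' τ'' ⟨x, y, hx, hxy⟩ ⟨u, v, hu, huv⟩
    obtain ⟨v₂, hv₂⟩ := tp_extend k u (x ++ y) v (hu.trans hxy.symm)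
    refine ⟨x, y ++ v₂, hx, ?_⟩
    rw [← List.append_assoc, hv₂, huv]
  · rintro τ τ' ⟨u, v, hu, huv⟩ ⟨u', v', hu', hu'v'⟩
    cases k with
    | zero => rw [← hu, ← hu', tp_zero, tp_zero]
    | succ r =>
      obtain ⟨z, hz⟩ := tp_extend (r + 1) u' (u ++ v) v' (hu'.trans huv.symm)
      have h1 : tp (r + 1) (Word.ofList ((u ++ v) ++ z)) = tp (r + 1) (Word.ofList u) := by
        rw [hz, hu'v', ← hu]
      have hS := stype_of_tp r _ _ h1
      have hmono1 := stype_mono r u v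
      have hmono2 := stype_mono r (u ++ v) z
      have hSeq : Stype A r (u ++ v) = Stype A r u :=
        Set.Subset.antisymm (fun t ht => by rw [← hS]; exact hmono2 ht) hmono1
      rw [← hu, ← huv]
      exact (tp_of_stype r _ _ hSeq).symm
  · rintro τ ⟨l, rfl⟩
    exact ⟨[], l, rfl, by rw [List.nil_append]⟩

end PrefSynth
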